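/- arXiv:math/0701063 — 2 statements merged into one kernel-verified Lean document; each statement's English description precedes it below -/
import Mathlib

section
/- Let ε : U × U × ℝ₊ × ℝ → ℝᵖ be a C² function with ε(u, u, t, x) = 0 for all u ∈ U, t ≥ 0, x ∈ ℝ, where U is a convex open neighborhood of the origin. Then there exists a constant C such that for all (u_L, u_R), (u_L', u_R') ∈ U × U and (t₀,x₀), (t₀',x₀') in a compact set, |ε(u_L',u_R',t₀',x₀') - ε(u_L,u_R,t₀,x₀)| ≤ C·|u_R - u_L|·(|u_L'-u_L| + |u_R'-u_R| + |t₀'-t₀| + |x₀'-x₀|) + C·|(u_R'-u_L') - (u_R-u_L)|. -/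
open Metric Set Filter Topology

lemma aux_fderiv_zero {p : ℕ}
    (φ : (Fin p → ℝ) × (Fin p → ℝ) × ℝ × ℝ → (Fin p → ℝ))
    (hφ : ContDiff ℝ 2 φ)
    (h0 : ∀ (a : Fin p → ℝ) (t x : ℝ), 0 ≤ t → φ (a, 0, t, x) = 0)
    (a : Fin p → ℝ) (t x : ℝ) (ht : 0 ≤ t) (h : Fin p → ℝ) (s y : ℝ) :
    fderiv ℝ φ (a, 0, t, x) (h, 0, s, y) = 0 := by
  have hdiff : Differentiable ℝ φ := hφ.differentiable (by norm_num)
  have key : ∀ (a : Fin p → ℝ) (t' x : ℝ), 0 < t' →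
      fderiv ℝ φ (a, 0, t', x) (h, 0, s, y) = 0 := by
    intro a t' x ht'
    set w : (Fin p → ℝ) × (Fin p → ℝ) × ℝ × ℝ := (h, 0, s, y) with hw
    set q : (Fin p → ℝ) × (Fin p → ℝ) × ℝ × ℝ := (a, 0, t', x) with hq
    have hc : HasDerivAt (fun r : ℝ => q + r • w) w 0 := by
      simpa using ((hasDerivAt_id (0 : ℝ)).smul_const w).const_add q
    have hg : HasDerivAt (fun r : ℝ => φ (q + r • w)) (fderiv ℝ φ q (h, 0, s, y)) 0 := by
      have := (hdiff (q + (0:ℝ) • w)).hasFDerivAt.comp_hasDerivAt 0 hc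
      simpa [hw, Function.comp_def] using this
    have hev : (fun r : ℝ => φ (q + r • w)) =ᶠ[𝓝 (0:ℝ)] fun _ => 0 := by
      have hcont : Tendsto (fun r : ℝ => t' + r * s) (𝓝 0) (𝓝 t') := by
        have : Continuous (fun r : ℝ => t' + r * s) := by continuity
        simpa using this.tendsto 0
      filter_upwards [hcont.eventually (lt_mem_nhds ht')] with r hr
      have hqr : q + r • w = (a + r • h, (0 : Fin p → ℝ), t' + r * s, x + r * y) := by
        simp [hq, hw, Prod.mk_add_mk, Prod.smul_mk, smul_eq_mul]
      rw [hqr]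
      exact h0 _ _ _ hr.le
    have h0' : HasDerivAt (fun r : ℝ => φ (q + r • w)) 0 0 :=
      (hasDerivAt_const (0:ℝ) (0 : Fin p → ℝ)).congr_of_eventuallyEq hev
    exact hg.unique h0'
  rcases ht.lt_or_eq with ht | ht
  · exact key a t x ht
  · subst ht
    set f : ℝ → (Fin p → ℝ) := fun τ => fderiv ℝ φ (a, 0, τ, x) (h, 0, s, y) with hf
    have hfc : Continuous f := by
      apply Continuous.clm_apply
      · exact (hφ.continuous_fderiv (by norm_num)).comp (by continuity)
      · exact continuous_const
    have h1 : Tendsto f (𝓝[>] (0:ℝ)) (𝓝 (f 0)) :=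
      (hfc.tendsto 0).mono_left nhdsWithin_le_nhds
    have h2 : Tendsto f (𝓝[>] (0:ℝ)) (𝓝 0) :=
      tendsto_const_nhds.congr'
        (eventually_nhdsWithin_of_forall fun τ hτ => (key a τ x hτ).symm)
    exact (tendsto_nhds_unique h1 h2)

/-- Key Lipschitz estimate (3.6) on the wave-strength map `ε`, a `C²` function
vanishing on the diagonal `u_L = u_R`. -/
theorem stmt2 {p : ℕ} (U : Set (Fin p → ℝ))
    (hU : Convex ℝ U) (hUo : IsOpen U) (hU0 : (0 : Fin p → ℝ) ∈ U)
    (hUb : Bornology.IsBounded U)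
    (ε : (Fin p → ℝ) × (Fin p → ℝ) × ℝ × ℝ → (Fin p → ℝ))
    (hε : ContDiff ℝ 2 ε)
    (hdiag : ∀ u : Fin p → ℝ, ∀ t x : ℝ, 0 ≤ t → ε (u, u, t, x) = 0) :
    ∀ K : Set (ℝ × ℝ), IsCompact K →
      ∃ C : ℝ, 0 ≤ C ∧
        ∀ uL uR uL' uR' : Fin p → ℝ, uL ∈ U → uR ∈ U → uL' ∈ U → uR' ∈ U →
        ∀ t₀ x₀ t₀' x₀' : ℝ, (t₀, x₀) ∈ K → (t₀', x₀') ∈ K → 0 ≤ t₀ → 0 ≤ t₀' →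
          ‖ε (uL', uR', t₀', x₀') - ε (uL, uR, t₀, x₀)‖ ≤
            C * ‖uR - uL‖ *
              (‖uL' - uL‖ + ‖uR' - uR‖ + |t₀' - t₀| + |x₀' - x₀|)
            + C * ‖(uR' - uL') - (uR - uL)‖ := by
  intro K hK
  classical
  set φ : (Fin p → ℝ) × (Fin p → ℝ) × ℝ × ℝ → (Fin p → ℝ) :=
    fun q => ε (q.1, q.1 + q.2.1, q.2.2.1, q.2.2.2) with hφdef
  have hφ : ContDiff ℝ 2 φ := by
    rw [hφdef]
    exact hε.comp (contDiff_fst.prodMk ((contDiff_fst.add contDiff_snd.fst).prodMk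
      (contDiff_snd.snd.fst.prodMk contDiff_snd.snd.snd)))
  have hdiffφ : Differentiable ℝ φ := hφ.differentiable (by norm_num)
  have h0 : ∀ (a : Fin p → ℝ) (t x : ℝ), 0 ≤ t → φ (a, 0, t, x) = 0 := by
    intro a t x ht
    rw [hφdef]
    show ε (a, a + 0, t, x) = 0
    rw [add_zero]
    exact hdiag a t x ht
  have hzero := aux_fderiv_zero φ hφ h0
  obtain ⟨r1, hr1⟩ := hUb.subset_closedBall 0
  obtain ⟨r2, hr2⟩ := hK.isBounded.subset_closedBall 0
  set a1 := max r1 0 with ha1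
  set a2 := max r2 0 with ha2
  have ha1n : 0 ≤ a1 := le_max_right _ _
  have ha2n : 0 ≤ a2 := le_max_right _ _
  have hUbd : ∀ u ∈ U, ‖u‖ ≤ a1 := fun u hu =>
    le_trans (mem_closedBall_zero_iff.mp (hr1 hu)) (le_max_left _ _)
  have hKbd : ∀ z ∈ K, |z.1| ≤ a2 ∧ |z.2| ≤ a2 := by
    intro z hz
    have := le_trans (mem_closedBall_zero_iff.mp (hr2 hz)) (le_max_left r2 0)
    rw [Prod.norm_def] at this
    exact ⟨le_trans (le_max_left _ _) this, le_trans (le_max_right _ _) this⟩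
  set R := 2 * a1 + a2 with hR
  have hRn : 0 ≤ R := by rw [hR]; linarith
  set S := Metric.closedBall (0 : (Fin p → ℝ) × (Fin p → ℝ) × ℝ × ℝ) R with hS
  have hSc : IsCompact S := isCompact_closedBall _ _
  have hSconv : Convex ℝ S := convex_closedBall _ _
  have hnorm4 : ∀ (a v : Fin p → ℝ) (τ ξ : ℝ),
      ‖((a, v, τ, ξ) : (Fin p → ℝ) × (Fin p → ℝ) × ℝ × ℝ)‖
        = max ‖a‖ (max ‖v‖ (max |τ| |ξ|)) := by
    intro a v τ ξ
    simp [Prod.norm_def, Real.norm_eq_abs]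
  have hmemS : ∀ (a v : Fin p → ℝ) (τ ξ : ℝ), ‖a‖ ≤ a1 → ‖v‖ ≤ 2 * a1 →
      |τ| ≤ a2 → |ξ| ≤ a2 →
      ((a, v, τ, ξ) : (Fin p → ℝ) × (Fin p → ℝ) × ℝ × ℝ) ∈ S := by
    intro a v τ ξ h1 h2 h3 h4
    rw [hS, mem_closedBall_zero_iff, hnorm4]
    have : R = 2 * a1 + a2 := hR
    refine max_le (by linarith) (max_le (by linarith) (max_le (by linarith) (by linarith)))
  obtain ⟨C₁, hC₁⟩ := hSc.exists_bound_of_continuousOn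
    ((hφ.continuous_fderiv (by norm_num)).continuousOn)
  have hD1 : ContDiff ℝ 1 (fderiv ℝ φ) := hφ.fderiv_right (by norm_num)
  obtain ⟨C₂, hC₂⟩ := hSc.exists_bound_of_continuousOn
    ((hD1.continuous_fderiv (by norm_num)).continuousOn)
  have hC₂0 : 0 ≤ C₂ :=
    le_trans (norm_nonneg _) (hC₂ 0 (mem_closedBall_self hRn))
  have hLip : ∀ q ∈ S, ∀ q' ∈ S,
      ‖fderiv ℝ φ q' - fderiv ℝ φ q‖ ≤ C₂ * ‖q' - q‖ := by
    intro q hq q' hq'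
    exact hSconv.norm_image_sub_le_of_norm_fderiv_le
      (fun z _ => (hD1.differentiable (by norm_num)).differentiableAt) hC₂ hq hq'
  set C := max (max C₁ C₂) 0 with hC
  have hCn : 0 ≤ C := le_max_right _ _
  have hC₁C : C₁ ≤ C := le_trans (le_max_left _ _) (le_max_left _ _)
  have hC₂C : C₂ ≤ C := le_trans (le_max_right _ _) (le_max_left _ _)
  refine ⟨C, hCn, ?_⟩
  intro uL uR uL' uR' huL huR huL' huR' t₀ x₀ t₀' x₀' hK1 hK2 ht ht'
  have hBnd : ∀ (a v : Fin p → ℝ) (τ ξ : ℝ),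
      ((a, v, τ, ξ) : (Fin p → ℝ) × (Fin p → ℝ) × ℝ × ℝ) ∈ S → 0 ≤ τ →
      ∀ (h : Fin p → ℝ) (s yy : ℝ),
      ‖fderiv ℝ φ (a, v, τ, ξ) ((h, 0, s, yy) : (Fin p → ℝ) × (Fin p → ℝ) × ℝ × ℝ)‖ ≤
        C₂ * ‖v‖ * ‖((h, 0, s, yy) : (Fin p → ℝ) × (Fin p → ℝ) × ℝ × ℝ)‖ := by
    intro a v τ ξ hq hτ h s yy
    have hq0 : ((a, (0 : Fin p → ℝ), τ, ξ) : (Fin p → ℝ) × (Fin p → ℝ) × ℝ × ℝ) ∈ S := by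
      rw [hS, mem_closedBall_zero_iff, hnorm4]
      rw [hS, mem_closedBall_zero_iff, hnorm4] at hq
      refine le_trans ?_ hq
      exact max_le_max le_rfl (max_le_max (by simp) le_rfl)
    have heq : fderiv ℝ φ (a, v, τ, ξ)
          ((h, 0, s, yy) : (Fin p → ℝ) × (Fin p → ℝ) × ℝ × ℝ) =
        (fderiv ℝ φ (a, v, τ, ξ) - fderiv ℝ φ (a, 0, τ, ξ))
          ((h, 0, s, yy) : (Fin p → ℝ) × (Fin p → ℝ) × ℝ × ℝ) := by
      rw [ContinuousLinearMap.sub_apply, hzero a τ ξ hτ h s yy, sub_zero]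
    rw [heq]
    have hnd : ‖((a, v, τ, ξ) : (Fin p → ℝ) × (Fin p → ℝ) × ℝ × ℝ)
        - ((a, (0:Fin p → ℝ), τ, ξ) : (Fin p → ℝ) × (Fin p → ℝ) × ℝ × ℝ)‖ = ‖v‖ := by
      have h1 : ((a, v, τ, ξ) : (Fin p → ℝ) × (Fin p → ℝ) × ℝ × ℝ)
          - ((a, (0:Fin p → ℝ), τ, ξ) : (Fin p → ℝ) × (Fin p → ℝ) × ℝ × ℝ)
          = ((0, v, 0, 0) : (Fin p → ℝ) × (Fin p → ℝ) × ℝ × ℝ) := by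
        simp [Prod.mk_sub_mk]; rfl
      rw [h1, hnorm4]
      simp [norm_nonneg]
    calc ‖(fderiv ℝ φ (a, v, τ, ξ) - fderiv ℝ φ (a, 0, τ, ξ))
            ((h, 0, s, yy) : (Fin p → ℝ) × (Fin p → ℝ) × ℝ × ℝ)‖
        ≤ ‖fderiv ℝ φ (a, v, τ, ξ) - fderiv ℝ φ (a, 0, τ, ξ)‖
            * ‖((h, 0, s, yy) : (Fin p → ℝ) × (Fin p → ℝ) × ℝ × ℝ)‖ :=
          ContinuousLinearMap.le_opNorm _ _
      _ ≤ (C₂ * ‖v‖) * ‖((h, 0, s, yy) : (Fin p → ℝ) × (Fin p → ℝ) × ℝ × ℝ)‖ := by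
          gcongr
          have := hLip _ hq0 _ hq
          rwa [hnd] at this
      _ = C₂ * ‖v‖ * ‖((h, 0, s, yy) : (Fin p → ℝ) × (Fin p → ℝ) × ℝ × ℝ)‖ := by ring
  set v : Fin p → ℝ := uR - uL with hv
  have huLv : uL + v = uR := by rw [hv]; abel
  have huLv' : uL' + (uR' - uL') = uR' := by abel
  set q : (Fin p → ℝ) × (Fin p → ℝ) × ℝ × ℝ := (uL, v, t₀, x₀) with hqdef
  set q' : (Fin p → ℝ) × (Fin p → ℝ) × ℝ × ℝ := (uL', uR' - uL', t₀', x₀') with hq'def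
  set w : (Fin p → ℝ) × (Fin p → ℝ) × ℝ × ℝ := (uL' - uL, 0, t₀' - t₀, x₀' - x₀) with hwdef
  have hqm_eq : q + w = ((uL', v, t₀', x₀') : (Fin p → ℝ) × (Fin p → ℝ) × ℝ × ℝ) := by
    rw [hqdef, hwdef]
    simp only [Prod.mk_add_mk, Prod.mk.injEq]
    refine ⟨by abel, by abel, by ring, by ring⟩
  have hvbd : ‖v‖ ≤ 2 * a1 := by
    calc ‖v‖ ≤ ‖uR‖ + ‖uL‖ := norm_sub_le _ _
      _ ≤ a1 + a1 := add_le_add (hUbd _ huR) (hUbd _ huL)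
      _ = 2 * a1 := by ring
  have hv'bd : ‖uR' - uL'‖ ≤ 2 * a1 := by
    calc ‖uR' - uL'‖ ≤ ‖uR'‖ + ‖uL'‖ := norm_sub_le _ _
      _ ≤ a1 + a1 := add_le_add (hUbd _ huR') (hUbd _ huL')
      _ = 2 * a1 := by ring
  obtain ⟨hKt, hKx⟩ := hKbd _ hK1
  obtain ⟨hKt', hKx'⟩ := hKbd _ hK2
  have hqS : q ∈ S := hmemS _ _ _ _ (hUbd _ huL) hvbd hKt hKx
  have hq'S : q' ∈ S := hmemS _ _ _ _ (hUbd _ huL') hv'bd hKt' hKx'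
  have hqmS : q + w ∈ S := by
    rw [hqm_eq]; exact hmemS _ _ _ _ (hUbd _ huL') hvbd hKt' hKx'
  have hstep1 : ‖φ q' - φ (q + w)‖ ≤ C₁ * ‖(uR' - uL') - (uR - uL)‖ := by
    have hmain := hSconv.norm_image_sub_le_of_norm_fderiv_le
      (fun z _ => hdiffφ z) hC₁ hqmS hq'S
    refine le_trans hmain ?_
    have hdq : q' - (q + w) = ((0, (uR' - uL') - (uR - uL), 0, 0) :
        (Fin p → ℝ) × (Fin p → ℝ) × ℝ × ℝ) := by
      rw [hqm_eq, hq'def, hv]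
      simp [Prod.mk_sub_mk]; rfl
    rw [hdq, hnorm4]
    simp [norm_nonneg]
  set M := ‖uL' - uL‖ + ‖uR' - uR‖ + |t₀' - t₀| + |x₀' - x₀| with hM
  have hn1 : (0:ℝ) ≤ ‖uL' - uL‖ := norm_nonneg _
  have hn2 : (0:ℝ) ≤ ‖uR' - uR‖ := norm_nonneg _
  have hn3 : (0:ℝ) ≤ |t₀' - t₀| := abs_nonneg _
  have hn4 : (0:ℝ) ≤ |x₀' - x₀| := abs_nonneg _
  have hMn : 0 ≤ M := by rw [hM]; linarith
  have hwM : ‖w‖ ≤ M := by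
    rw [hwdef, hnorm4, hM, norm_zero]
    refine max_le (by linarith) (max_le (by linarith) (max_le (by linarith) (by linarith)))
  have hseg : ∀ r ∈ Icc (0:ℝ) 1, q + r • w ∈ S := by
    intro r hr
    have h' := hSconv.add_smul_sub_mem hqS hqmS hr
    rwa [add_sub_cancel_left] at h'
  have hdecomp : ∀ r : ℝ, q + r • w =
      ((uL + r • (uL' - uL), v, t₀ + r * (t₀' - t₀), x₀ + r * (x₀' - x₀)) :
        (Fin p → ℝ) × (Fin p → ℝ) × ℝ × ℝ) := by
    intro r
    rw [hqdef, hwdef]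
    simp only [Prod.smul_mk, Prod.mk_add_mk, Prod.mk.injEq, smul_eq_mul, smul_zero, add_zero]
  have hgd : ∀ r ∈ Icc (0:ℝ) 1,
      HasDerivWithinAt (fun r : ℝ => φ (q + r • w)) (fderiv ℝ φ (q + r • w) w)
        (Icc 0 1) r := by
    intro r hr
    have hc : HasDerivAt (fun r : ℝ => q + r • w) w r := by
      simpa using ((hasDerivAt_id r).smul_const w).const_add q
    exact ((hdiffφ (q + r • w)).hasFDerivAt.comp_hasDerivAt r hc).hasDerivWithinAt
  have hbound : ∀ r ∈ Ico (0:ℝ) 1, ‖fderiv ℝ φ (q + r • w) w‖ ≤ C₂ * ‖v‖ * M := by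
    intro r hr
    have hrIcc : r ∈ Icc (0:ℝ) 1 := ⟨hr.1, hr.2.le⟩
    have hqrS := hseg r hrIcc
    rw [hdecomp r] at hqrS
    have htr : 0 ≤ t₀ + r * (t₀' - t₀) := by
      rw [show t₀ + r * (t₀' - t₀) = (1 - r) * t₀ + r * t₀' from by ring]
      exact add_nonneg (mul_nonneg (sub_nonneg.mpr hr.2.le) ht) (mul_nonneg hr.1 ht')
    have hb := hBnd _ _ _ _ hqrS htr (uL' - uL) (t₀' - t₀) (x₀' - x₀)
    rw [hdecomp r, hwdef]
    refine le_trans hb ?_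
    have hwn : ‖((uL' - uL, (0:Fin p → ℝ), t₀' - t₀, x₀' - x₀) :
        (Fin p → ℝ) × (Fin p → ℝ) × ℝ × ℝ)‖ ≤ M := by
      rw [← hwdef]; exact hwM
    gcongr
  have hmvt := norm_image_sub_le_of_norm_deriv_le_segment' hgd hbound 1
    (right_mem_Icc.2 zero_le_one)
  have hstep2 : ‖φ (q + w) - φ q‖ ≤ C₂ * ‖v‖ * M := by
    have h1 : q + (1:ℝ) • w = q + w := by rw [one_smul]
    have h0' : q + (0:ℝ) • w = q := by rw [zero_smul, add_zero]
    rw [h1, h0'] at hmvt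
    simpa using hmvt
  have hφq : φ q = ε (uL, uR, t₀, x₀) := by
    rw [hφdef, hqdef]
    show ε (uL, uL + v, t₀, x₀) = _
    rw [huLv]
  have hφq' : φ q' = ε (uL', uR', t₀', x₀') := by
    rw [hφdef, hq'def]
    show ε (uL', uL' + (uR' - uL'), t₀', x₀') = _
    rw [huLv']
  rw [← hφq, ← hφq']
  calc ‖φ q' - φ q‖ ≤ ‖φ q' - φ (q + w)‖ + ‖φ (q + w) - φ q‖ :=
        norm_sub_le_norm_sub_add_norm_sub _ _ _
    _ ≤ C₁ * ‖(uR' - uL') - (uR - uL)‖ + C₂ * ‖v‖ * M := add_le_add hstep1 hstep2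
    _ ≤ C * ‖v‖ * M + C * ‖(uR' - uL') - (uR - uL)‖ := by
        have h1 : C₁ * ‖(uR' - uL') - (uR - uL)‖ ≤ C * ‖(uR' - uL') - (uR - uL)‖ :=
          mul_le_mul_of_nonneg_right hC₁C (norm_nonneg _)
        have h2 : C₂ * ‖v‖ * M ≤ C * ‖v‖ * M := by
          apply mul_le_mul_of_nonneg_right _ hMn
          exact mul_le_mul_of_nonneg_right hC₂C (norm_nonneg _)
        linarith
end

section
/- Let θ : ℝ² → ℝ be C¹ with compact support, and let v : ℝ² → ℝᵖ be C¹ on the triangle T = {(t,x) : 0 ≤ t ≤ s, σ⁻t ≤ x ≤ σ⁺t} (with σ⁻ < σ⁺), and suppose |∂ₜv + ∂ₓ(F(t,x)) - G(t,x)| ≤ E on T where F = f(t,x,v(t,x)) and G = g(t,x,v(t,x)) for C¹ maps f, g. Then |∫∫_T (v·∂ₜθ + F·∂ₓθ + G·θ) dx dt - B(θ)| ≤ E·‖θ‖_{C⁰}·|T|, where B(θ) := ∫_{σ⁻s}^{σ⁺s} v(s,x)θ(s,x)dx + ∫₀ˢ (F(t,σ⁺t) - σ⁺v(t,σ⁺t))θ(t,σ⁺t)dt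 - ∫₀ˢ (F(t,σ⁻t) - σ⁻v(t,σ⁻t))θ(t,σ⁻t)dt and |T| = (σ⁺-σ⁻)s²/2 is the area of T. -/
open intervalIntegral

open MeasureTheory Set in
private lemma clm_apply_decomp {E : Type*} [NormedAddCommGroup E] [NormedSpace ℝ E]
    (L : ℝ × ℝ →L[ℝ] E) (t y : ℝ) :
    L (1, y) = L (1, 0) + y • L (0, 1) ∧ L (0, t) = t • L (0, 1) := by
  constructor
  · have h : ((1:ℝ), y) = ((1:ℝ), (0:ℝ)) + y • ((0:ℝ), (1:ℝ)) := by
      simp [Prod.ext_iff]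
    rw [h, map_add, L.map_smul]
  · have h : ((0:ℝ), t) = t • ((0:ℝ), (1:ℝ)) := by simp [Prod.ext_iff]
    rw [h, L.map_smul]

open MeasureTheory in
private lemma ae_ne_pt (c : ℝ) : ∀ᵐ y : ℝ, y ≠ c := by
  have : {y : ℝ | ¬ y ≠ c} = {c} := by ext y; simp
  rw [ae_iff, this]
  exact measure_singleton c

set_option maxHeartbeats 1000000 in
/-- Green's formula on the triangle swept by a rarefaction fan: the weak-form
integral differs from the boundary terms `B(θ)` by at most
`E·‖θ‖_{C⁰}·|T|` where `|T| = (σ⁺ - σ⁻)s²/2`. -/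
theorem stmt11 {p : ℕ}
    (θ : ℝ × ℝ → ℝ) (hθ : ContDiff ℝ 1 θ) (hθc : HasCompactSupport θ)
    (Θ : ℝ) (hΘ : ∀ z, |θ z| ≤ Θ)
    (f g : ℝ → ℝ → (Fin p → ℝ) → (Fin p → ℝ))
    (hfC1 : ContDiff ℝ 1 (fun z : ℝ × ℝ × (Fin p → ℝ) => f z.1 z.2.1 z.2.2))
    (hgC1 : ContDiff ℝ 1 (fun z : ℝ × ℝ × (Fin p → ℝ) => g z.1 z.2.1 z.2.2))
    (s σm σp E : ℝ) (hs : 0 < s) (hσ : σm < σp) (hE : 0 ≤ E)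
    (T : Set (ℝ × ℝ))
    (hT : T = {z : ℝ × ℝ | 0 ≤ z.1 ∧ z.1 ≤ s ∧ σm * z.1 ≤ z.2 ∧ z.2 ≤ σp * z.1})
    (v : ℝ → ℝ → (Fin p → ℝ))
    (hv : ContDiffOn ℝ 1 (fun z : ℝ × ℝ => v z.1 z.2) T)
    (F G : ℝ → ℝ → (Fin p → ℝ))
    (hF : ∀ t x, F t x = f t x (v t x))
    (hG : ∀ t x, G t x = g t x (v t x))
    (hres : ∀ z ∈ T,
      ‖deriv (fun t' => v t' z.2) z.1 + deriv (fun x' => F z.1 x') z.2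
          - G z.1 z.2‖ ≤ E) :
    ‖(∫ t in (0:ℝ)..s, ∫ x in (σm * t)..(σp * t),
          (deriv (fun t' => θ (t', x)) t) • v t x
            + (deriv (fun x' => θ (t, x')) x) • F t x
            + θ (t, x) • G t x)
        - ((∫ x in (σm * s)..(σp * s), θ (s, x) • v s x)
            + (∫ t in (0:ℝ)..s,
                θ (t, σp * t) • (F t (σp * t) - σp • v t (σp * t)))
            - (∫ t in (0:ℝ)..s,
                θ (t, σm * t) • (F t (σm * t) - σm • v t (σm * t))))‖ ≤
      E * Θ * ((σp - σm) * s ^ 2 / 2) := by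
  classical
  open Set MeasureTheory in
  have hΘ0 : 0 ≤ Θ := le_trans (abs_nonneg _) (hΘ (0, 0))
  set V : ℝ × ℝ → (Fin p → ℝ) := fun z => v z.1 z.2 with hVdef
  set Ff : ℝ × ℝ → (Fin p → ℝ) := fun z => F z.1 z.2 with hFfdef
  set Gg : ℝ × ℝ → (Fin p → ℝ) := fun z => G z.1 z.2 with hGgdef
  set Φ : ℝ × ℝ → ℝ × ℝ := fun q => (q.1, q.1 * q.2) with hΦdef
  set Q : Set (ℝ × ℝ) := Set.Icc 0 s ×ˢ Set.Icc σm σp with hQdef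
  set Qo : Set (ℝ × ℝ) := Set.Ioo 0 s ×ˢ Set.Ioo σm σp with hQodef
  have hθd : Differentiable ℝ θ := hθ.differentiable one_ne_zero
  -- regularity of the basic two-variable maps on T
  have hVT : ContDiffOn ℝ 1 V T := hv
  have hFT : ContDiffOn ℝ 1 Ff T := by
    have h1 : ContDiffOn ℝ 1 (fun z : ℝ × ℝ => (z.1, z.2, V z)) T :=
      (contDiff_fst.contDiffOn).prodMk ((contDiff_snd.contDiffOn).prodMk hVT)
    exact (hfC1.comp_contDiffOn h1).congr fun z _ => by simp [hFfdef, hF, hVdef]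
  have hGT : ContDiffOn ℝ 1 Gg T := by
    have h1 : ContDiffOn ℝ 1 (fun z : ℝ × ℝ => (z.1, z.2, V z)) T :=
      (contDiff_fst.contDiffOn).prodMk ((contDiff_snd.contDiffOn).prodMk hVT)
    exact (hgC1.comp_contDiffOn h1).congr fun z _ => by simp [hGgdef, hG, hVdef]
  set u : ℝ × ℝ → (Fin p → ℝ) := fun z => θ z • V z with hudef
  set w : ℝ × ℝ → (Fin p → ℝ) := fun z => θ z • Ff z with hwdef
  have huT : ContDiffOn ℝ 1 u T := (hθ.contDiffOn).smul hVT
  have hwT : ContDiffOn ℝ 1 w T := (hθ.contDiffOn).smul hFT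
  have hΦc : ContDiff ℝ 1 Φ := contDiff_fst.prodMk (contDiff_fst.mul contDiff_snd)
  have hmaps : Set.MapsTo Φ Q T := by
    rintro ⟨t, y⟩ hq
    simp only [hQdef, Set.mem_prod, Set.mem_Icc] at hq
    obtain ⟨⟨ht0, hts⟩, hy1, hy2⟩ := hq
    rw [hT]
    refine ⟨ht0, hts, ?_, ?_⟩
    · simpa [mul_comm] using mul_le_mul_of_nonneg_left hy1 ht0
    · simpa [mul_comm] using mul_le_mul_of_nonneg_left hy2 ht0
  set ut : ℝ × ℝ → (Fin p → ℝ) := fun q => u (Φ q) with hutdef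
  set wt : ℝ × ℝ → (Fin p → ℝ) := fun q => w (Φ q) with hwtdef
  have hutQ : ContDiffOn ℝ 1 ut Q := huT.comp (hΦc.contDiffOn) hmaps.subset_preimage
  have hwtQ : ContDiffOn ℝ 1 wt Q := hwT.comp (hΦc.contDiffOn) hmaps.subset_preimage
  have hQu : UniqueDiffOn ℝ Q := (uniqueDiffOn_Icc hs).prod (uniqueDiffOn_Icc hσ)
  set Du : ℝ × ℝ → (ℝ × ℝ →L[ℝ] (Fin p → ℝ)) := fderivWithin ℝ ut Q with hDudef
  set Dw : ℝ × ℝ → (ℝ × ℝ →L[ℝ] (Fin p → ℝ)) := fderivWithin ℝ wt Q with hDwdef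
  have hDuc : ContinuousOn Du Q := hutQ.continuousOn_fderivWithin hQu le_rfl
  have hDwc : ContinuousOn Dw Q := hwtQ.continuousOn_fderivWithin hQu le_rfl
  set Pf : ℝ × ℝ → (Fin p → ℝ) := fun z =>
    (fderiv ℝ θ z (1, 0)) • V z + (fderiv ℝ θ z (0, 1)) • Ff z + θ z • Gg z with hPfdef
  set P : ℝ × ℝ → (Fin p → ℝ) := fun q => q.1 • Pf (Φ q) with hPdef
  set DA : ℝ × ℝ → (Fin p → ℝ) := fun q => q.1 • Du q (1, 0) + (1 : ℝ) • ut q with hDAdef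
  set Dβ : ℝ × ℝ → (Fin p → ℝ) :=
    fun q => Dw q (0, 1) - (q.2 • Du q (0, 1) + (1 : ℝ) • ut q) with hDβdef
  set ρ : ℝ × ℝ → (Fin p → ℝ) := fun q => DA q + Dβ q - P q with hρdef
  -- continuity facts on `Q`
  have hPfc : ContinuousOn Pf T := by
    have hdθ : Continuous (fderiv ℝ θ) := hθ.continuous_fderiv one_ne_zero
    exact (((hdθ.clm_apply continuous_const).continuousOn.smul hVT.continuousOn).add
      ((hdθ.clm_apply continuous_const).continuousOn.smul hFT.continuousOn)).add
      ((hθ.continuous).continuousOn.smul hGT.continuousOn)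
  have hPc : ContinuousOn P Q :=
    continuous_fst.continuousOn.smul (hPfc.comp (hΦc.continuous.continuousOn) hmaps)
  have hutc : ContinuousOn ut Q := hutQ.continuousOn
  have hwtc : ContinuousOn wt Q := hwtQ.continuousOn
  have hDAc : ContinuousOn DA Q :=
    (continuous_fst.continuousOn.smul (hDuc.clm_apply continuousOn_const)).add
      (hutc.const_smul (1:ℝ))
  have hDβc : ContinuousOn Dβ Q :=
    (hDwc.clm_apply continuousOn_const).sub
      ((continuous_snd.continuousOn.smul (hDuc.clm_apply continuousOn_const)).add
        (hutc.const_smul (1:ℝ)))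
  have hρc : ContinuousOn ρ Q := (hDAc.add hDβc).sub hPc
  -- interior structure
  have hQoQ : Qo ⊆ Q := Set.prod_mono Set.Ioo_subset_Icc_self Set.Ioo_subset_Icc_self
  have hQoOpen : IsOpen Qo := isOpen_Ioo.prod isOpen_Ioo
  have hQnhds : ∀ q ∈ Qo, Q ∈ nhds q := fun q hq =>
    Filter.mem_of_superset (hQoOpen.mem_nhds hq) hQoQ
  set U : Set (ℝ × ℝ) :=
    {z : ℝ × ℝ | 0 < z.1 ∧ z.1 < s ∧ σm * z.1 < z.2 ∧ z.2 < σp * z.1} with hUdef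
  have hUopen : IsOpen U := by
    have : U = {z : ℝ × ℝ | 0 < z.1} ∩ ({z : ℝ × ℝ | z.1 < s} ∩
        ({z : ℝ × ℝ | σm * z.1 < z.2} ∩ {z : ℝ × ℝ | z.2 < σp * z.1})) := by
      ext z; simp [hUdef, and_assoc]
    rw [this]
    exact (isOpen_lt continuous_const continuous_fst).inter
      ((isOpen_lt continuous_fst continuous_const).inter
        ((isOpen_lt (continuous_const.mul continuous_fst) continuous_snd).inter
          (isOpen_lt continuous_snd (continuous_const.mul continuous_fst))))
  have hUT : U ⊆ T := by
    rw [hT]; rintro z ⟨h1, h2, h3, h4⟩; exact ⟨h1.le, h2.le, h3.le, h4.le⟩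
  have hΦU : ∀ q ∈ Qo, Φ q ∈ U := by
    rintro ⟨t, y⟩ hq
    simp only [hQodef, Set.mem_prod, Set.mem_Ioo] at hq
    obtain ⟨⟨ht0, hts⟩, hy1, hy2⟩ := hq
    refine ⟨ht0, hts, ?_, ?_⟩
    · simpa [mul_comm] using mul_lt_mul_of_pos_left hy1 ht0
    · simpa [mul_comm] using mul_lt_mul_of_pos_left hy2 ht0
  have hTnhds : ∀ q ∈ Qo, T ∈ nhds (Φ q) := fun q hq =>
    Filter.mem_of_superset (hUopen.mem_nhds (hΦU q hq)) hUT
  -- global derivative identities for θ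
  have eθt : ∀ t x : ℝ, deriv (fun t' => θ (t', x)) t = fderiv ℝ θ (t, x) (1, 0) := by
    intro t x
    exact ((hθd (t, x)).hasFDerivAt.comp_hasDerivAt t
      ((hasDerivAt_id t).prodMk (hasDerivAt_const t x))).deriv
  have eθx : ∀ t x : ℝ, deriv (fun x' => θ (t, x')) x = fderiv ℝ θ (t, x) (0, 1) := by
    intro t x
    exact ((hθd (t, x)).hasFDerivAt.comp_hasDerivAt x
      ((hasDerivAt_const x t).prodMk (hasDerivAt_id x))).deriv
  -- the slice derivative facts on the open rectangle
  have hAderiv : ∀ q ∈ Qo, HasDerivAt (fun t' => t' • ut (t', q.2)) (DA q) q.1 := by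
    intro q hq
    have hzT : Φ q ∈ T := hUT (hΦU q hq)
    have hTn : T ∈ nhds (Φ q) := hTnhds q hq
    have hVz : DifferentiableAt ℝ V (Φ q) :=
      ((hVT (Φ q) hzT).differentiableWithinAt one_ne_zero).differentiableAt hTn
    have huz : DifferentiableAt ℝ u (Φ q) := (hθd (Φ q)).smul hVz
    have hΦq : DifferentiableAt ℝ Φ q := (hΦc.differentiable one_ne_zero) q
    have hutd : DifferentiableAt ℝ ut q := huz.comp q hΦq
    have hDueq : Du q = fderiv ℝ ut q := fderivWithin_of_mem_nhds (hQnhds q hq)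
    have hus : HasDerivAt (fun t' => ut (t', q.2)) (fderiv ℝ ut q (1, 0)) q.1 :=
      hutd.hasFDerivAt.comp_hasDerivAt_of_eq q.1
        ((hasDerivAt_id q.1).prodMk (hasDerivAt_const q.1 q.2)) rfl
    have hA := (hasDerivAt_id q.1).smul hus
    simp only [hDAdef, hDueq]
    exact hA
  have hβderiv : ∀ q ∈ Qo,
      HasDerivAt (fun y' => wt (q.1, y') - y' • ut (q.1, y')) (Dβ q) q.2 := by
    intro q hq
    have hzT : Φ q ∈ T := hUT (hΦU q hq)
    have hTn : T ∈ nhds (Φ q) := hTnhds q hq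
    have hVz : DifferentiableAt ℝ V (Φ q) :=
      ((hVT (Φ q) hzT).differentiableWithinAt one_ne_zero).differentiableAt hTn
    have hFz : DifferentiableAt ℝ Ff (Φ q) :=
      ((hFT (Φ q) hzT).differentiableWithinAt one_ne_zero).differentiableAt hTn
    have hΦq : DifferentiableAt ℝ Φ q := (hΦc.differentiable one_ne_zero) q
    have hutd : DifferentiableAt ℝ ut q := ((hθd (Φ q)).smul hVz).comp q hΦq
    have hwtd : DifferentiableAt ℝ wt q := ((hθd (Φ q)).smul hFz).comp q hΦq
    have hDueq : Du q = fderiv ℝ ut q := fderivWithin_of_mem_nhds (hQnhds q hq)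
    have hDweq : Dw q = fderiv ℝ wt q := fderivWithin_of_mem_nhds (hQnhds q hq)
    have huy : HasDerivAt (fun y' => ut (q.1, y')) (fderiv ℝ ut q (0, 1)) q.2 :=
      hutd.hasFDerivAt.comp_hasDerivAt_of_eq q.2
        ((hasDerivAt_const q.2 q.1).prodMk (hasDerivAt_id q.2)) rfl
    have hwy : HasDerivAt (fun y' => wt (q.1, y')) (fderiv ℝ wt q (0, 1)) q.2 :=
      hwtd.hasFDerivAt.comp_hasDerivAt_of_eq q.2
        ((hasDerivAt_const q.2 q.1).prodMk (hasDerivAt_id q.2)) rfl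
    have hB := hwy.sub ((hasDerivAt_id q.2).smul huy)
    simp only [hDβdef, hDueq, hDweq]
    exact hB
  have hρeq : ∀ q ∈ Qo, ρ q = q.1 • θ (Φ q) •
      (deriv (fun t' => v t' (Φ q).2) (Φ q).1 + deriv (fun x' => F (Φ q).1 x') (Φ q).2
        - G (Φ q).1 (Φ q).2) := by
    intro q hq
    have hzT : Φ q ∈ T := hUT (hΦU q hq)
    have hTn : T ∈ nhds (Φ q) := hTnhds q hq
    have hVz : DifferentiableAt ℝ V (Φ q) :=
      ((hVT (Φ q) hzT).differentiableWithinAt one_ne_zero).differentiableAt hTn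
    have hFz : DifferentiableAt ℝ Ff (Φ q) :=
      ((hFT (Φ q) hzT).differentiableWithinAt one_ne_zero).differentiableAt hTn
    have hΦq : DifferentiableAt ℝ Φ q := (hΦc.differentiable one_ne_zero) q
    have hutd : DifferentiableAt ℝ ut q := ((hθd (Φ q)).smul hVz).comp q hΦq
    have hwtd : DifferentiableAt ℝ wt q := ((hθd (Φ q)).smul hFz).comp q hΦq
    have hDueq : Du q = fderiv ℝ ut q := fderivWithin_of_mem_nhds (hQnhds q hq)
    have hDweq : Dw q = fderiv ℝ wt q := fderivWithin_of_mem_nhds (hQnhds q hq)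
    have huf : HasFDerivAt u
        (θ (Φ q) • fderiv ℝ V (Φ q) + (fderiv ℝ θ (Φ q)).smulRight (V (Φ q))) (Φ q) :=
      (hθd (Φ q)).hasFDerivAt.smul hVz.hasFDerivAt
    have hwf : HasFDerivAt w
        (θ (Φ q) • fderiv ℝ Ff (Φ q) + (fderiv ℝ θ (Φ q)).smulRight (Ff (Φ q))) (Φ q) :=
      (hθd (Φ q)).hasFDerivAt.smul hFz.hasFDerivAt
    have hγ1 : HasDerivAt (fun t' : ℝ => (t', t' * q.2)) ((1 : ℝ), q.2) q.1 := by
      have := (hasDerivAt_id q.1).prodMk ((hasDerivAt_id q.1).mul_const q.2)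
      simpa using this
    have hγ2 : HasDerivAt (fun y' : ℝ => (q.1, q.1 * y')) ((0 : ℝ), q.1) q.2 := by
      have := (hasDerivAt_const q.2 q.1).prodMk ((hasDerivAt_id q.2).const_mul q.1)
      simpa using this
    have e1 : fderiv ℝ ut q (1, 0) =
        (θ (Φ q) • fderiv ℝ V (Φ q) + (fderiv ℝ θ (Φ q)).smulRight (V (Φ q))) (1, q.2) := by
      have hL : HasDerivAt (fun t' => ut (t', q.2)) (fderiv ℝ ut q (1, 0)) q.1 :=
        hutd.hasFDerivAt.comp_hasDerivAt_of_eq q.1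
          ((hasDerivAt_id q.1).prodMk (hasDerivAt_const q.1 q.2)) rfl
      have hR : HasDerivAt (fun t' => ut (t', q.2))
          ((θ (Φ q) • fderiv ℝ V (Φ q) + (fderiv ℝ θ (Φ q)).smulRight (V (Φ q))) (1, q.2))
          q.1 := huf.comp_hasDerivAt_of_eq q.1 hγ1 rfl
      exact hL.unique hR
    have e2 : fderiv ℝ ut q (0, 1) =
        (θ (Φ q) • fderiv ℝ V (Φ q) + (fderiv ℝ θ (Φ q)).smulRight (V (Φ q))) (0, q.1) := by
      have hL : HasDerivAt (fun y' => ut (q.1, y')) (fderiv ℝ ut q (0, 1)) q.2 :=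
        hutd.hasFDerivAt.comp_hasDerivAt_of_eq q.2
          ((hasDerivAt_const q.2 q.1).prodMk (hasDerivAt_id q.2)) rfl
      have hR : HasDerivAt (fun y' => ut (q.1, y'))
          ((θ (Φ q) • fderiv ℝ V (Φ q) + (fderiv ℝ θ (Φ q)).smulRight (V (Φ q))) (0, q.1))
          q.2 := huf.comp_hasDerivAt_of_eq q.2 hγ2 rfl
      exact hL.unique hR
    have e3 : fderiv ℝ wt q (0, 1) =
        (θ (Φ q) • fderiv ℝ Ff (Φ q) + (fderiv ℝ θ (Φ q)).smulRight (Ff (Φ q))) (0, q.1) := by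
      have hL : HasDerivAt (fun y' => wt (q.1, y')) (fderiv ℝ wt q (0, 1)) q.2 :=
        hwtd.hasFDerivAt.comp_hasDerivAt_of_eq q.2
          ((hasDerivAt_const q.2 q.1).prodMk (hasDerivAt_id q.2)) rfl
      have hR : HasDerivAt (fun y' => wt (q.1, y'))
          ((θ (Φ q) • fderiv ℝ Ff (Φ q) + (fderiv ℝ θ (Φ q)).smulRight (Ff (Φ q))) (0, q.1))
          q.2 := hwf.comp_hasDerivAt_of_eq q.2 hγ2 rfl
      exact hL.unique hR
    have eV : deriv (fun t' => v t' (Φ q).2) (Φ q).1 = fderiv ℝ V (Φ q) (1, 0) :=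
      (hVz.hasFDerivAt.comp_hasDerivAt_of_eq (Φ q).1
        ((hasDerivAt_id (Φ q).1).prodMk (hasDerivAt_const (Φ q).1 (Φ q).2)) rfl).deriv
    have eF : deriv (fun x' => F (Φ q).1 x') (Φ q).2 = fderiv ℝ Ff (Φ q) (0, 1) :=
      (hFz.hasFDerivAt.comp_hasDerivAt_of_eq (Φ q).2
        ((hasDerivAt_const (Φ q).2 (Φ q).1).prodMk (hasDerivAt_id (Φ q).2)) rfl).deriv
    have hutq : ut q = θ (Φ q) • V (Φ q) := rfl
    rw [eV, eF]
    simp only [hρdef, hDAdef, hDβdef, hPdef, hPfdef, hDueq, hDweq, e1, e2, e3,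
      ContinuousLinearMap.add_apply, ContinuousLinearMap.coe_smul', Pi.smul_apply,
      ContinuousLinearMap.smulRight_apply, hutq]
    rw [(clm_apply_decomp (fderiv ℝ V (Φ q)) q.1 q.2).1,
        (clm_apply_decomp (fderiv ℝ V (Φ q)) q.1 q.2).2,
        (clm_apply_decomp (fderiv ℝ Ff (Φ q)) q.1 q.2).2,
        (clm_apply_decomp (fderiv ℝ θ (Φ q)) q.1 q.2).1,
        (clm_apply_decomp (fderiv ℝ θ (Φ q)) q.1 q.2).2]
    have hGz : Gg (Φ q) = G (Φ q).1 (Φ q).2 := rfl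
    rw [hGz]
    simp only [smul_eq_mul]
    module
  -- Step A: change of variables x = t*y in the inner integral
  have hinner : ∀ t : ℝ,
      (∫ x in (σm * t)..(σp * t),
          (deriv (fun t' => θ (t', x)) t) • v t x
            + (deriv (fun x' => θ (t, x')) x) • F t x
            + θ (t, x) • G t x)
        = ∫ y in σm..σp, P (t, y) := by
    intro t
    have h1 : (∫ x in (σm * t)..(σp * t),
        (deriv (fun t' => θ (t', x)) t) • v t x
          + (deriv (fun x' => θ (t, x')) x) • F t x + θ (t, x) • G t x)
        = ∫ x in (t * σm)..(t * σp), Pf (t, x) := by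
      rw [mul_comm σm t, mul_comm σp t]
      apply intervalIntegral.integral_congr
      intro x _
      simp only [hPfdef, eθt t x, eθx t x, hVdef, hFfdef, hGgdef]
    rw [h1, ← intervalIntegral.smul_integral_comp_mul_left (fun x => Pf (t, x)) t,
      ← intervalIntegral.integral_smul]
  have hLHS : (∫ t in (0:ℝ)..s, ∫ x in (σm * t)..(σp * t),
        (deriv (fun t' => θ (t', x)) t) • v t x
          + (deriv (fun x' => θ (t, x')) x) • F t x
          + θ (t, x) • G t x)
      = ∫ t in (0:ℝ)..s, ∫ y in σm..σp, P (t, y) :=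
    intervalIntegral.integral_congr fun t _ => hinner t
  -- measure-theoretic plumbing
  set μ : MeasureTheory.Measure ℝ := MeasureTheory.volume.restrict (Set.Ioc 0 s) with hμdef
  set ν : MeasureTheory.Measure ℝ := MeasureTheory.volume.restrict (Set.Ioc σm σp) with hνdef
  have hQcomp : IsCompact Q := isCompact_Icc.prod isCompact_Icc
  have key_int : ∀ (h : ℝ × ℝ → (Fin p → ℝ)), ContinuousOn h Q →
      MeasureTheory.Integrable h (μ.prod ν) := by
    intro h hc
    rw [hμdef, hνdef, MeasureTheory.Measure.prod_restrict,
      ← MeasureTheory.Measure.volume_eq_prod]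
    exact (hc.integrableOn_compact hQcomp).mono_set
      (Set.prod_mono Set.Ioc_subset_Icc_self Set.Ioc_subset_Icc_self)
  have mkII : ∀ (h : ℝ × ℝ → (Fin p → ℝ)), ContinuousOn h Q →
      IntervalIntegrable (fun t => ∫ y in σm..σp, h (t, y)) MeasureTheory.volume 0 s := by
    intro h hc
    have h3 : MeasureTheory.Integrable (fun t => ∫ y, h (t, y) ∂ν) μ :=
      (key_int h hc).integral_prod_left
    rw [intervalIntegrable_iff, Set.uIoc_of_le hs.le]
    have he : (fun t => ∫ y in σm..σp, h (t, y)) = fun t => ∫ y, h (t, y) ∂ν := by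
      funext t
      rw [intervalIntegral.integral_of_le hσ.le]
    rw [he]
    exact h3
  have mkSlice : ∀ (h : ℝ × ℝ → (Fin p → ℝ)), ContinuousOn h Q → ∀ t ∈ Set.Icc (0:ℝ) s,
      IntervalIntegrable (fun y => h (t, y)) MeasureTheory.volume σm σp := by
    intro h hc t ht
    rw [intervalIntegrable_iff, Set.uIoc_of_le hσ.le]
    exact ((hc.comp (continuous_const.prodMk continuous_id).continuousOn
      (fun y hy => ⟨ht, hy⟩)).integrableOn_compact isCompact_Icc).mono_set
      Set.Ioc_subset_Icc_self
  -- Fubini for the DA piece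
  have hswapDA : (∫ t in (0:ℝ)..s, ∫ y in σm..σp, DA (t, y))
      = ∫ y in σm..σp, ∫ t in (0:ℝ)..s, DA (t, y) := by
    simp_rw [intervalIntegral.integral_of_le hσ.le, intervalIntegral.integral_of_le hs.le]
    exact MeasureTheory.integral_integral_swap (key_int DA hDAc)
  -- FTC in t
  have hFTCt : ∀ y ∈ Set.Ioo σm σp, (∫ t in (0:ℝ)..s, DA (t, y)) = s • ut (s, y) := by
    intro y hy
    have hcy : Continuous (fun t : ℝ => (t, y)) := continuous_id.prodMk continuous_const
    have hmapIcc : Set.MapsTo (fun t : ℝ => (t, y)) (Set.Icc 0 s) Q :=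
      fun t ht => ⟨ht, Set.Ioo_subset_Icc_self hy⟩
    have hcont : ContinuousOn (fun t : ℝ => t • ut (t, y)) (Set.Icc 0 s) :=
      continuousOn_id.smul (hutc.comp hcy.continuousOn hmapIcc)
    have hder : ∀ t ∈ Set.Ioo 0 s,
        HasDerivWithinAt (fun t' : ℝ => t' • ut (t', y)) (DA (t, y)) (Set.Ioi t) t :=
      fun t ht => (hAderiv (t, y) ⟨ht, hy⟩).hasDerivWithinAt
    have hint : IntervalIntegrable (fun t => DA (t, y)) MeasureTheory.volume 0 s := by
      rw [intervalIntegrable_iff, Set.uIoc_of_le hs.le]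
      exact ((hDAc.comp hcy.continuousOn hmapIcc).integrableOn_compact
        isCompact_Icc).mono_set Set.Ioc_subset_Icc_self
    have := intervalIntegral.integral_eq_sub_of_hasDeriv_right_of_le hs.le hcont hder hint
    simpa using this
  have hDAtotal : (∫ t in (0:ℝ)..s, ∫ y in σm..σp, DA (t, y))
      = ∫ x in (σm * s)..(σp * s), θ (s, x) • v s x := by
    rw [hswapDA]
    have h1 : (∫ y in σm..σp, ∫ t in (0:ℝ)..s, DA (t, y))
        = ∫ y in σm..σp, s • ut (s, y) := by
      rw [intervalIntegral.integral_of_le hσ.le, intervalIntegral.integral_of_le hσ.le]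
      apply MeasureTheory.setIntegral_congr_ae measurableSet_Ioc
      filter_upwards [ae_ne_pt σp] with y hyne hyIoc
      exact hFTCt y ⟨hyIoc.1, lt_of_le_of_ne hyIoc.2 hyne⟩
    rw [h1, intervalIntegral.integral_smul, mul_comm σm s, mul_comm σp s]
    exact intervalIntegral.smul_integral_comp_mul_left (fun x => θ (s, x) • v s x) s
  -- FTC in y
  have hFTCy : ∀ t ∈ Set.Ioo 0 s, (∫ y in σm..σp, Dβ (t, y))
      = (wt (t, σp) - σp • ut (t, σp)) - (wt (t, σm) - σm • ut (t, σm)) := by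
    intro t ht
    have hcy : Continuous (fun y : ℝ => (t, y)) := continuous_const.prodMk continuous_id
    have hmapIcc : Set.MapsTo (fun y : ℝ => (t, y)) (Set.Icc σm σp) Q :=
      fun y hy => ⟨Set.Ioo_subset_Icc_self ht, hy⟩
    have hcont : ContinuousOn (fun y : ℝ => wt (t, y) - y • ut (t, y)) (Set.Icc σm σp) :=
      (hwtc.comp hcy.continuousOn hmapIcc).sub
        (continuousOn_id.smul (hutc.comp hcy.continuousOn hmapIcc))
    have hder : ∀ y ∈ Set.Ioo σm σp,
        HasDerivWithinAt (fun y' => wt (t, y') - y' • ut (t, y')) (Dβ (t, y))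
          (Set.Ioi y) y :=
      fun y hy => (hβderiv (t, y) ⟨ht, hy⟩).hasDerivWithinAt
    have hint : IntervalIntegrable (fun y => Dβ (t, y)) MeasureTheory.volume σm σp := by
      rw [intervalIntegrable_iff, Set.uIoc_of_le hσ.le]
      exact ((hDβc.comp hcy.continuousOn hmapIcc).integrableOn_compact
        isCompact_Icc).mono_set Set.Ioc_subset_Icc_self
    exact intervalIntegral.integral_eq_sub_of_hasDeriv_right_of_le hσ.le hcont hder hint
  -- identification of the boundary fluxes
  have hbp : ∀ t : ℝ, (wt (t, σp) - σp • ut (t, σp))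
      = θ (t, σp * t) • (F t (σp * t) - σp • v t (σp * t)) := by
    intro t
    have h2 : θ (t, σp * t) • (F t (σp * t) - σp • v t (σp * t))
        = θ (t, σp * t) • F t (σp * t) - σp • (θ (t, σp * t) • v t (σp * t)) := by
      rw [smul_sub, smul_comm (θ (t, σp * t)) σp]
    rw [h2]
    simp only [hwtdef, hutdef, hudef, hwdef, hΦdef, hFfdef, hVdef]
    rw [mul_comm t σp]
  have hbm : ∀ t : ℝ, (wt (t, σm) - σm • ut (t, σm))
      = θ (t, σm * t) • (F t (σm * t) - σm • v t (σm * t)) := by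
    intro t
    have h2 : θ (t, σm * t) • (F t (σm * t) - σm • v t (σm * t))
        = θ (t, σm * t) • F t (σm * t) - σm • (θ (t, σm * t) • v t (σm * t)) := by
      rw [smul_sub, smul_comm (θ (t, σm * t)) σm]
    rw [h2]
    simp only [hwtdef, hutdef, hudef, hwdef, hΦdef, hFfdef, hVdef]
    rw [mul_comm t σm]
  have hcurvep : Set.MapsTo (fun t : ℝ => (t, σp)) (Set.Icc 0 s) Q :=
    fun t ht => ⟨ht, Set.right_mem_Icc.2 hσ.le⟩
  have hcurvem : Set.MapsTo (fun t : ℝ => (t, σm)) (Set.Icc 0 s) Q :=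
    fun t ht => ⟨ht, Set.left_mem_Icc.2 hσ.le⟩
  have hIg1 : IntervalIntegrable
      (fun t => θ (t, σp * t) • (F t (σp * t) - σp • v t (σp * t)))
      MeasureTheory.volume 0 s := by
    have hc : ContinuousOn (fun t : ℝ => wt (t, σp) - σp • ut (t, σp)) (Set.Icc 0 s) :=
      (hwtc.comp (continuous_id.prodMk continuous_const).continuousOn hcurvep).sub
        ((hutc.comp (continuous_id.prodMk continuous_const).continuousOn hcurvep).const_smul
          σp)
    rw [intervalIntegrable_iff, Set.uIoc_of_le hs.le]
    exact (((hc.congr (fun t _ => (hbp t).symm)).integrableOn_compact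
      isCompact_Icc).mono_set Set.Ioc_subset_Icc_self)
  have hIg2 : IntervalIntegrable
      (fun t => θ (t, σm * t) • (F t (σm * t) - σm • v t (σm * t)))
      MeasureTheory.volume 0 s := by
    have hc : ContinuousOn (fun t : ℝ => wt (t, σm) - σm • ut (t, σm)) (Set.Icc 0 s) :=
      (hwtc.comp (continuous_id.prodMk continuous_const).continuousOn hcurvem).sub
        ((hutc.comp (continuous_id.prodMk continuous_const).continuousOn hcurvem).const_smul
          σm)
    rw [intervalIntegrable_iff, Set.uIoc_of_le hs.le]
    exact (((hc.congr (fun t _ => (hbm t).symm)).integrableOn_compact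
      isCompact_Icc).mono_set Set.Ioc_subset_Icc_self)
  have hDβtotal : (∫ t in (0:ℝ)..s, ∫ y in σm..σp, Dβ (t, y))
      = (∫ t in (0:ℝ)..s, θ (t, σp * t) • (F t (σp * t) - σp • v t (σp * t)))
        - (∫ t in (0:ℝ)..s, θ (t, σm * t) • (F t (σm * t) - σm • v t (σm * t))) := by
    rw [← intervalIntegral.integral_sub hIg1 hIg2]
    apply intervalIntegral.integral_congr_ae
    filter_upwards [ae_ne_pt s] with t htne htIoc
    rw [Set.uIoc_of_le hs.le] at htIoc
    have ht : t ∈ Set.Ioo 0 s := ⟨htIoc.1, lt_of_le_of_ne htIoc.2 htne⟩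
    rw [hFTCy t ht, hbp t, hbm t]
  -- splitting
  have hIDA := mkII DA hDAc
  have hIDβ := mkII Dβ hDβc
  have hIρ := mkII ρ hρc
  have hsplit : (∫ t in (0:ℝ)..s, ∫ y in σm..σp, P (t, y))
      = (∫ t in (0:ℝ)..s, ∫ y in σm..σp, DA (t, y))
        + (∫ t in (0:ℝ)..s, ∫ y in σm..σp, Dβ (t, y))
        - ∫ t in (0:ℝ)..s, ∫ y in σm..σp, ρ (t, y) := by
    have h1 : ∀ t ∈ Set.uIcc (0:ℝ) s, (∫ y in σm..σp, P (t, y))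
        = (∫ y in σm..σp, DA (t, y)) + (∫ y in σm..σp, Dβ (t, y))
          - ∫ y in σm..σp, ρ (t, y) := by
      intro t ht
      rw [Set.uIcc_of_le hs.le] at ht
      have iDA := mkSlice DA hDAc t ht
      have iDβ := mkSlice Dβ hDβc t ht
      have iρ := mkSlice ρ hρc t ht
      have h2 : (∫ y in σm..σp, P (t, y))
          = ∫ y in σm..σp, (DA (t, y) + Dβ (t, y)) - ρ (t, y) := by
        apply intervalIntegral.integral_congr
        intro y _
        simp only [hρdef]
        abel
      rw [h2, intervalIntegral.integral_sub (iDA.add iDβ) iρ,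
        intervalIntegral.integral_add iDA iDβ]
    rw [intervalIntegral.integral_congr h1,
      intervalIntegral.integral_sub (hIDA.add hIDβ) hIρ,
      intervalIntegral.integral_add hIDA hIDβ]
  -- bound on the residual term
  have hρbound : ‖∫ t in (0:ℝ)..s, ∫ y in σm..σp, ρ (t, y)‖
      ≤ E * Θ * ((σp - σm) * s ^ 2 / 2) := by
    have hptw : ∀ q ∈ Qo, ‖ρ q‖ ≤ E * Θ * q.1 := by
      intro q hq
      have hq' := hq
      simp only [hQodef, Set.mem_prod, Set.mem_Ioo] at hq'
      rw [hρeq q hq]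
      have hzT : Φ q ∈ T := hUT (hΦU q hq)
      have hRb := hres (Φ q) hzT
      have hθb := hΘ (Φ q)
      have hq1 : (0:ℝ) < q.1 := hq'.1.1
      rw [norm_smul, norm_smul, Real.norm_eq_abs, Real.norm_eq_abs, abs_of_pos hq1]
      have h1 : (0:ℝ) ≤ ‖deriv (fun t' => v t' (Φ q).2) (Φ q).1
          + deriv (fun x' => F (Φ q).1 x') (Φ q).2 - G (Φ q).1 (Φ q).2‖ := norm_nonneg _
      have h2 : |θ (Φ q)| * ‖deriv (fun t' => v t' (Φ q).2) (Φ q).1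
          + deriv (fun x' => F (Φ q).1 x') (Φ q).2 - G (Φ q).1 (Φ q).2‖ ≤ Θ * E :=
        mul_le_mul hθb hRb h1 hΘ0
      calc q.1 * (|θ (Φ q)| * ‖deriv (fun t' => v t' (Φ q).2) (Φ q).1
          + deriv (fun x' => F (Φ q).1 x') (Φ q).2 - G (Φ q).1 (Φ q).2‖)
          ≤ q.1 * (Θ * E) := mul_le_mul_of_nonneg_left h2 hq1.le
        _ = E * Θ * q.1 := by ring
    have hinnerb : ∀ t ∈ Set.Ioo 0 s,
        ‖∫ y in σm..σp, ρ (t, y)‖ ≤ (E * Θ * (σp - σm)) * t := by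
      intro t ht
      have hae : ∀ᵐ y : ℝ, y ∈ Set.uIoc σm σp → ‖ρ (t, y)‖ ≤ E * Θ * t := by
        filter_upwards [ae_ne_pt σp] with y hyne hy
        rw [Set.uIoc_of_le hσ.le] at hy
        exact hptw (t, y) ⟨ht, ⟨hy.1, lt_of_le_of_ne hy.2 hyne⟩⟩
      calc ‖∫ y in σm..σp, ρ (t, y)‖ ≤ (E * Θ * t) * |σp - σm| :=
            intervalIntegral.norm_integral_le_of_norm_le_const_ae hae
        _ = (E * Θ * (σp - σm)) * t := by
            rw [abs_of_nonneg (sub_nonneg.2 hσ.le)]; ring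
    have haeT : ∀ᵐ t ∂(MeasureTheory.volume.restrict (Set.uIoc (0:ℝ) s)),
        ‖∫ y in σm..σp, ρ (t, y)‖ ≤ (E * Θ * (σp - σm)) * t := by
      rw [Set.uIoc_of_le hs.le]
      filter_upwards [MeasureTheory.ae_restrict_mem measurableSet_Ioc,
        MeasureTheory.ae_restrict_of_ae (ae_ne_pt s)] with t htIoc htne
      exact hinnerb t ⟨htIoc.1, lt_of_le_of_ne htIoc.2 htne⟩
    have hgi : IntervalIntegrable (fun t => (E * Θ * (σp - σm)) * t)
        MeasureTheory.volume 0 s :=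
      (continuous_const.mul continuous_id).intervalIntegrable 0 s
    calc ‖∫ t in (0:ℝ)..s, ∫ y in σm..σp, ρ (t, y)‖
        ≤ |∫ t in (0:ℝ)..s, (E * Θ * (σp - σm)) * t| :=
          intervalIntegral.norm_integral_le_abs_of_norm_le haeT hgi
      _ = E * Θ * ((σp - σm) * s ^ 2 / 2) := by
          rw [intervalIntegral.integral_const_mul, integral_id]
          rw [abs_of_nonneg]
          · ring
          · have h1 : (0:ℝ) ≤ σp - σm := sub_nonneg.2 hσ.le
            have h2 : (0:ℝ) ≤ (s ^ 2 - 0 ^ 2) / 2 := by nlinarith [sq_nonneg s]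
            exact mul_nonneg (mul_nonneg (mul_nonneg hE hΘ0) h1) h2
  -- final assembly
  rw [hLHS, hsplit, hDAtotal, hDβtotal]
  have hfin : ∀ (a b c r : Fin p → ℝ), (a + (b - c) - r) - (a + b - c) = -r := by
    intro a b c r; abel
  rw [hfin, norm_neg]
  exact hρbound
end
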